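/- The function r \mapsto \sqrt{r \tanh r} on [0,\infty) possesses an extension F : \mathbb{R} \to \mathbb{R} that is real-analytic, strictly increasing, and odd. -/

import Mathlib

open Filter Set

private lemma analyticAt_rsinh (x : ℝ) : AnalyticAt ℝ Real.sinh x := by
  have h : Real.sinh = fun x : ℝ => (Real.exp x - Real.exp (-x)) / 2 :=
    funext fun x => Real.sinh_eq x
  rw [h]
  exact ((analyticAt_rexp.sub (analyticAt_rexp.comp (analyticAt_id.neg))).div
    analyticAt_const two_ne_zero)

private lemma analyticAt_rcosh (x : ℝ) : AnalyticAt ℝ Real.cosh x := by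
  have h : Real.cosh = fun x : ℝ => (Real.exp x + Real.exp (-x)) / 2 :=
    funext fun x => Real.cosh_eq x
  rw [h]
  exact ((analyticAt_rexp.add (analyticAt_rexp.comp (analyticAt_id.neg))).div
    analyticAt_const two_ne_zero)

private lemma analyticAt_rtanh (x : ℝ) : AnalyticAt ℝ Real.tanh x := by
  have h : Real.tanh = fun x : ℝ => Real.sinh x / Real.cosh x :=
    funext fun x => Real.tanh_eq_sinh_div_cosh x
  rw [h]
  exact (analyticAt_rsinh x).div (analyticAt_rcosh x) (Real.cosh_pos x).ne'

private lemma analyticAt_rlog {x : ℝ} (hx : 0 < x) : AnalyticAt ℝ Real.log x := by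
  have h1 : AnalyticAt ℂ Complex.log (x : ℂ) :=
    analyticAt_clog (by simp [Complex.mem_slitPlane_iff, hx])
  have h2 : AnalyticAt ℝ Complex.log ((Complex.ofRealCLM : ℝ →L[ℝ] ℂ) x) :=
    h1.restrictScalars
  have h3 : AnalyticAt ℝ (fun t : ℝ => Complex.log t) x :=
    h2.comp (Complex.ofRealCLM.analyticAt x)
  have h4 : AnalyticAt ℝ (fun t : ℝ => (Complex.log t).re) x :=
    ((Complex.reCLM : ℂ →L[ℝ] ℝ).analyticAt _).comp h3
  apply h4.congr
  filter_upwards [eventually_gt_nhds hx] with t ht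
  rw [← Complex.ofReal_log ht.le, Complex.ofReal_re]

private lemma analyticAt_rsqrt {x : ℝ} (hx : 0 < x) : AnalyticAt ℝ Real.sqrt x := by
  have h : AnalyticAt ℝ (fun t : ℝ => Real.exp (Real.log t / 2)) x :=
    analyticAt_rexp.comp ((analyticAt_rlog hx).div analyticAt_const two_ne_zero)
  apply h.congr
  filter_upwards [eventually_gt_nhds hx] with t ht
  rw [Real.sqrt_eq_rpow, Real.rpow_def_of_pos ht]
  ring_nf

private noncomputable def Gaux : ℝ → ℝ := dslope Real.tanh 0

private lemma tanh_lt_tanh' {a b : ℝ} (h : a < b) : Real.tanh a < Real.tanh b := by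
  rw [Real.tanh_eq_sinh_div_cosh, Real.tanh_eq_sinh_div_cosh,
    div_lt_div_iff₀ (Real.cosh_pos a) (Real.cosh_pos b)]
  have h1 : 0 < Real.sinh (b - a) := Real.sinh_pos_iff.2 (sub_pos.2 h)
  rw [Real.sinh_sub] at h1
  linarith

private lemma tanh_pos' {x : ℝ} (hx : 0 < x) : 0 < Real.tanh x := by
  simpa [Real.tanh_zero] using tanh_lt_tanh' hx

private lemma Gaux_of_ne {x : ℝ} (hx : x ≠ 0) : Gaux x = Real.tanh x / x := by
  rw [Gaux, dslope_of_ne _ hx, slope_def_field, Real.tanh_zero, sub_zero, sub_zero]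

private lemma Gaux_pos (x : ℝ) : 0 < Gaux x := by
  rcases lt_trichotomy x 0 with h | h | h
  · rw [Gaux_of_ne h.ne]
    have ht : Real.tanh x < 0 := by simpa [Real.tanh_zero] using tanh_lt_tanh' h
    exact div_pos_of_neg_of_neg ht h
  · subst h
    rw [Gaux, dslope_same]
    have hd : HasDerivAt Real.tanh 1 0 := by
      have h1 := (Real.hasDerivAt_sinh 0).div (Real.hasDerivAt_cosh 0) (Real.cosh_pos 0).ne'
      have he : (Real.sinh / Real.cosh) = Real.tanh :=
        funext fun x => (Real.tanh_eq_sinh_div_cosh x).symm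
      rw [he] at h1
      refine h1.congr_deriv ?_
      simp
    rw [hd.deriv]
    norm_num
  · rw [Gaux_of_ne h.ne']
    exact div_pos (tanh_pos' h) h

private lemma Gaux_even (x : ℝ) : Gaux (-x) = Gaux x := by
  rcases eq_or_ne x 0 with rfl | h
  · simp
  · rw [Gaux_of_ne (neg_ne_zero.2 h), Gaux_of_ne h, Real.tanh_neg, neg_div_neg_eq]

private lemma Gaux_analyticAt (x : ℝ) : AnalyticAt ℝ Gaux x := by
  rcases eq_or_ne x 0 with rfl | h
  · obtain ⟨p, hp⟩ := analyticAt_rtanh 0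
    exact ⟨p.fslope, hp.has_fpower_series_dslope_fslope⟩
  · have h1 : AnalyticAt ℝ (fun y : ℝ => Real.tanh y / y) x :=
      (analyticAt_rtanh x).div analyticAt_id h
    apply h1.congr
    filter_upwards [eventually_ne_nhds h] with t ht
    rw [Gaux_of_ne ht]

theorem exists_analytic_odd_extension :
    ∃ F : ℝ → ℝ,
      (∀ r : ℝ, 0 ≤ r → F r = Real.sqrt (r * Real.tanh r)) ∧
      AnalyticOn ℝ F Set.univ ∧
      StrictMono F ∧
      (∀ r : ℝ, F (-r) = -F r) := by
  refine ⟨fun r => r * Real.sqrt (Gaux r), ?_, ?_, ?_, ?_⟩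
  · intro r hr
    show r * Real.sqrt (Gaux r) = Real.sqrt (r * Real.tanh r)
    rcases eq_or_lt_of_le hr with rfl | hr
    · simp [Real.tanh_zero]
    · rw [Gaux_of_ne hr.ne']
      have h1 : r * Real.tanh r = r ^ 2 * (Real.tanh r / r) := by
        field_simp
      rw [h1, Real.sqrt_mul (sq_nonneg r), Real.sqrt_sq hr.le]
  · intro x _
    exact ((analyticAt_id.mul
      ((analyticAt_rsqrt (Gaux_pos x)).comp (Gaux_analyticAt x)))).analyticWithinAt
  · have key : ∀ r : ℝ, 0 ≤ r → r * Real.sqrt (Gaux r) = Real.sqrt (r * Real.tanh r) := by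
      intro r hr
      rcases eq_or_lt_of_le hr with rfl | hr
      · simp [Real.tanh_zero]
      · rw [Gaux_of_ne hr.ne']
        have h1 : r * Real.tanh r = r ^ 2 * (Real.tanh r / r) := by
          field_simp
        rw [h1, Real.sqrt_mul (sq_nonneg r), Real.sqrt_sq hr.le]
    have mono0 : ∀ a b : ℝ, 0 ≤ a → a < b →
        a * Real.sqrt (Gaux a) < b * Real.sqrt (Gaux b) := by
      intro a b ha hab
      rw [key a ha, key b (ha.trans hab.le)]
      apply Real.sqrt_lt_sqrt
      · apply mul_nonneg ha
        rcases eq_or_lt_of_le ha with rfl | ha'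
        · simp
        · exact (tanh_pos' ha').le
      · have hb : 0 < b := lt_of_le_of_lt ha hab
        have ht := tanh_lt_tanh' hab
        have hta : 0 ≤ Real.tanh a := by
          rcases eq_or_lt_of_le ha with rfl | ha'
          · simp
          · exact (tanh_pos' ha').le
        nlinarith
    intro a b hab
    simp only
    rcases le_or_gt 0 a with ha | ha
    · exact mono0 a b ha hab
    · rcases le_or_gt 0 b with hb | hb
      · have h1 : a * Real.sqrt (Gaux a) < 0 := by
          have h2 : 0 < (-a) * Real.sqrt (Gaux (-a)) := by
            have := mono0 0 (-a) le_rfl (by linarith)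
            simpa using this
          rw [Gaux_even] at h2
          nlinarith [Real.sqrt_nonneg (Gaux a)]
        have h3 : 0 ≤ b * Real.sqrt (Gaux b) := by
          rcases eq_or_lt_of_le hb with rfl | hb'
          · simp
          · have := mono0 0 b le_rfl hb'
            simpa using this |>.le
        linarith
      · have h4 := mono0 (-b) (-a) (by linarith) (by linarith)
        rw [Gaux_even, Gaux_even] at h4
        nlinarith
  · intro r
    simp only [Gaux_even, neg_mul]
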